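/- Herbrand's Theorem (semantic form): Let L be a first-order language and let T be a universal L-theory, i.e., every sentence of T is the universal closure of a quantifier-free formula. Let φ(x,y) be a quantifier-free L-formula with free variables among {x,y}, and suppose that every model of T satisfies ∀x ∃y φ(x,y). Then there exist a natural number k ≥ 1 and L-terms t₁(x), …, t_k(x), each with free variables among {x}, such that every model of T satisfies ∀x (φ(x,t₁(x)) ∨ φ(x,t₂(x)) ∨ … ∨ φ(x,t_k(x))). -/
import Mathlib

open FirstOrder FirstOrder.Language

universe u v

namespace HerbrandAux

lemma isUniversal_alls {L : FirstOrder.Language} {α : Type*} {n : ℕ}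
    {χ : L.BoundedFormula α n} (h : χ.IsUniversal) : χ.alls.IsUniversal := by
  induction n with
  | zero => exact h
  | succ n ih => exact ih h.all

end HerbrandAux

theorem herbrand_theorem {L : FirstOrder.Language.{u, v}} (T : L.Theory)
    (hT : ∀ σ ∈ T, ∃ (n : ℕ) (χ : L.BoundedFormula Empty n), χ.IsQF ∧ σ = χ.alls)
    (φ : L.Formula (Fin 2)) (hφ : BoundedFormula.IsQF φ)
    (h : ∀ (M : Type (max u v)) [L.Structure M] [Nonempty M],
      M ⊨ T → ∀ x : M, ∃ y : M, φ.Realize ![x, y]) :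
    ∃ k : ℕ, 1 ≤ k ∧ ∃ t : Fin k → L.Term (Fin 1),
      ∀ (M : Type (max u v)) [L.Structure M] [Nonempty M],
        M ⊨ T → ∀ x : M, ∃ i : Fin k,
          φ.Realize ![x, Term.realize (fun _ : Fin 1 => x) (t i)] := by
  classical
  haveI hTU : T.IsUniversal := ⟨fun σ hσ => by
    obtain ⟨n, χ, hqf, rfl⟩ := hT σ hσ
    exact HerbrandAux.isUniversal_alls hqf.isUniversal⟩
  let χ : L.Term (Fin 1) → L.Formula (Fin 1) := fun s => φ.subst ![Term.var 0, s]
  let ψ : L.Term (Fin 1) → L[[Fin 1]].Sentence := fun s => Formula.equivSentence (χ s).not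
  have hχ : ∀ (M : Type (max u v)) [L.Structure M] (v : Fin 1 → M) (s : L.Term (Fin 1)),
      (χ s).Realize v ↔ φ.Realize ![v 0, s.realize v] := by
    intro M _ v s
    have h1 : (χ s).Realize v ↔ φ.Realize (fun a => (![Term.var 0, s] a).realize v) :=
      BoundedFormula.realize_subst
    rw [h1]
    have : (fun a => (![Term.var 0, s] a).realize v) = ![v 0, s.realize v] := by
      funext i
      fin_cases i <;> simp
    rw [this]
  -- the expanded theory
  set T' : L[[Fin 1]].Theory :=
    (L.lhomWithConstants (Fin 1)).onTheory T ∪ Set.range ψ with hT'def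
  have hunsat : ¬ T'.IsSatisfiable := by
    rintro ⟨N⟩
    letI : L.Structure N := (L.lhomWithConstants (Fin 1)).reduct N
    haveI : (L.lhomWithConstants (Fin 1)).IsExpansionOn N :=
      LHom.isExpansionOn_reduct (L.lhomWithConstants (Fin 1)) N
    have hNT' : N ⊨ T' := N.is_model
    haveI hNT : N ⊨ T :=
      ((L.lhomWithConstants (Fin 1)).onTheory_model T).1
        (hNT'.mono Set.subset_union_left)
    have hNψ : ∀ s, N ⊨ ψ s := fun s =>
      hNT'.realize_of_mem _ (Set.mem_union_right _ ⟨s, rfl⟩)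
    set S' := Substructure.closure (L[[Fin 1]]) (∅ : Set N) with hS'def
    letI : L.Structure S' := (L.lhomWithConstants (Fin 1)).reduct S'
    let c : N := ((L.con (0 : Fin 1) : L[[Fin 1]].Constants) : N)
    have hc : c ∈ S' := Substructure.constants_mem _
    haveI : Nonempty S' := ⟨⟨c, hc⟩⟩
    let e : S' ↪[L] N :=
      { toFun := Subtype.val
        inj' := Subtype.val_injective
        map_fun' := fun f x => S'.subtype.map_fun _ x
        map_rel' := fun r x => S'.subtype.map_rel _ x }
    haveI hST : (S' : Type (max u v)) ⊨ T := Theory.IsUniversal.models_of_embedding e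
    obtain ⟨y, hy⟩ := h S' hST ⟨c, hc⟩
    have hy' : φ.Realize ![c, (y : N)] := by
      have hy0 : BoundedFormula.Realize φ (![⟨c, hc⟩, y] : Fin 2 → S') default := hy
      have h2 := (hφ.realize_embedding e (v := (![⟨c, hc⟩, y] : Fin 2 → S'))
        (xs := (default : Fin 0 → S'))).2 hy0
      have h3 : (e ∘ ![⟨c, hc⟩, y]) = ![c, (y : N)] := by
        funext i; fin_cases i <;> rfl
      have h4 : (e ∘ (default : Fin 0 → S')) = default := Subsingleton.elim _ _
      rw [h3, h4] at h2
      exact h2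
    obtain ⟨tt, htt⟩ := Substructure.mem_closure_iff_exists_term.1 y.2
    let s : L.Term (Fin 1) :=
      (tt.constantsToVars).relabel
        (Sum.elim id (fun e => (Set.notMem_empty _ e.2).elim))
    have hs : s.realize (fun a => ((L.con a : L[[Fin 1]].Constants) : N)) = (y : N) := by
      rw [← htt]
      show Term.realize _ (Term.relabel _ _) = _
      rw [Term.realize_relabel]
      rw [← Term.realize_constantsToVars (t := tt) (v := ((↑) : (∅ : Set N) → N))]
      congr 1
      funext z
      rcases z with a | e
      · rfl
      · exact (Set.notMem_empty _ e.2).elim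
    have h5 := hNψ s
    rw [show ψ s = Formula.equivSentence (χ s).not from rfl,
      Formula.realize_equivSentence, Formula.realize_not, hχ] at h5
    apply h5
    rw [hs]
    exact hy'
  have hfin : ¬ T'.IsFinitelySatisfiable := fun hf =>
    hunsat (Theory.isSatisfiable_iff_isFinitelySatisfiable.2 hf)
  rw [Theory.IsFinitelySatisfiable] at hfin
  push_neg at hfin
  obtain ⟨T₀, hsub, hT₀⟩ := hfin
  let f : L[[Fin 1]].Sentence → L.Term (Fin 1) := fun σ =>
    if hσ : ∃ s, ψ s = σ then hσ.choose else Term.var 0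
  let ts : Finset (L.Term (Fin 1)) := (T₀.filter (fun σ => ∃ s, ψ s = σ)).image f
  refine ⟨ts.card + 1, Nat.succ_le_succ (Nat.zero_le _),
    Fin.cons (Term.var 0) (fun i => (ts.equivFin.symm i : L.Term (Fin 1))), ?_⟩
  intro M _ _ hM x
  letI : (constantsOn (Fin 1)).Structure M := constantsOn.structure (fun _ => x)
  have hnot : ¬ M ⊨ (T₀ : L[[Fin 1]].Theory) := fun hmod =>
    hT₀ (Theory.Model.isSatisfiable M)
  rw [Theory.model_iff] at hnot
  push_neg at hnot
  obtain ⟨σ, hσT₀, hσ⟩ := hnot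
  rcases hsub hσT₀ with hmem | hmem
  · exfalso
    rw [LHom.mem_onTheory] at hmem
    obtain ⟨σ₀, hσ₀T, rfl⟩ := hmem
    haveI := hM
    exact hσ ((LHom.realize_onSentence (M := M) (L.lhomWithConstants (Fin 1)) σ₀).2
      (T.realize_sentence_of_mem hσ₀T))
  · obtain ⟨s₀, rfl⟩ := hmem
    have hex : ∃ s, ψ s = ψ s₀ := ⟨s₀, rfl⟩
    have hψs : ψ (f (ψ s₀)) = ψ s₀ := by
      show ψ (if hσ : ∃ s, ψ s = ψ s₀ then hσ.choose else Term.var 0) = ψ s₀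
      rw [dif_pos hex]
      exact hex.choose_spec
    have hmemts : f (ψ s₀) ∈ ts :=
      Finset.mem_image_of_mem f (Finset.mem_filter.2 ⟨hσT₀, hex⟩)
    refine ⟨(ts.equivFin ⟨f (ψ s₀), hmemts⟩).succ, ?_⟩
    rw [← hψs] at hσ
    rw [show ψ (f (ψ s₀)) = Formula.equivSentence (χ (f (ψ s₀))).not from rfl,
      Formula.realize_equivSentence, Formula.realize_not, not_not, hχ] at hσ
    have hcon : ∀ a : Fin 1, ((L.con a : L[[Fin 1]].Constants) : M) = x := fun a => rfl
    rw [Fin.cons_succ]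
    have ht : ((ts.equivFin.symm (ts.equivFin ⟨f (ψ s₀), hmemts⟩) : ts) : L.Term (Fin 1))
        = f (ψ s₀) := by rw [Equiv.symm_apply_apply]
    rw [ht]
    have hv : (fun a : Fin 1 => ((L.con a : L[[Fin 1]].Constants) : M)) = fun _ => x := by
      funext a; exact hcon a
    rw [hv] at hσ
    exact hσ
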